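/- Let q = 3. Let H_s be an m×n real matrix with all entries in {0,1}, with exactly c ones per column and d ones per row; let L = H_sᵀ·H_s, λ₁ = cd, and let λ₂ < λ₁ satisfy v·L·vᵀ ≤ λ₂·‖v‖₂² for every v ∈ ℝⁿ with ⟨v, 𝟏⟩ = 0. For each row index j let I_j = { i : (H_s)_{j,i} = 1 }. For each i ∈ {1,…,n}, let f_i(0), f_i(1), f_i(2) be nonnegative reals with f_i(0) + f_i(1) + f_i(2) = 1, set x_i = f_i(1) + f_i(2), and assume that for every j and every ℓ ∈ I_j, Σ_{i ∈ I_j \ {ℓ}} x_i ≥ x_ℓ. Define S = 2 Σ_{i=1}^{n} ( 1 − Σ_{k=0}^{2} f_i(k) cos(2πk/3) ) and V = Σ_{i=1}^{n} ( Σ_{k=0}^{2} f_i(k)² + 2 Σ_{0≤k<ℓ≤2} f_i(k) f_i(ℓ) cos(2π(k−ℓ)/3) − 2 Σ_{k=0}^{2} f_i(k) cos(2πk/3) + 1 ). If V > 0, then S²/V ≥ 3·n·(2c − λ₂)/(λ₁ − λ₂). (This is stronger than the bound (1 − cos(2π/3))²·n·(2c−λ₂)/(λ₁−λ₂) = (9/4)·n·(2c−λ₂)/(λ₁−λ₂)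 obtained from the general q-ary theorem.) -/

import Mathlib

open Finset Matrix Real

set_option maxHeartbeats 1000000 in
/-- Eigenvalue bound for ternary (`q = 3`) PSK over AWGN: with `Hs` the 0–1 support
matrix of a `(c,d)`-regular parity-check matrix, `L = Hsᵀ Hs`, `λ₁ = cd`, and
`λ₂ < λ₁` an upper bound for the Rayleigh quotient of `L` on vectors orthogonal to the
all-ones vector, any normalized pseudocodeword matrix `(f i k)` (rows nonnegative,
summing to 1, satisfying the per-check inequalities on `x_i = f i 1 + f i 2`) with
`V > 0` has squared pseudodistance `S²/V ≥ 3 n (2c − λ₂)/(λ₁ − λ₂)`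
(stronger than the constant `(1 − cos(2π/3))² = 9/4` from the general theorem). -/
theorem min_pseudodistance_eigenvalue_bound_ternary {m n : ℕ} (c d : ℕ)
    (Hs : Matrix (Fin m) (Fin n) ℝ)
    (h01 : ∀ j i, Hs j i = 0 ∨ Hs j i = 1)
    (hcol : ∀ i, (univ.filter (fun j => Hs j i = 1)).card = c)
    (hrow : ∀ j, (univ.filter (fun i => Hs j i = 1)).card = d)
    (lam2 : ℝ) (hlam2 : lam2 < (c : ℝ) * d)
    (h2 : ∀ v : Fin n → ℝ, ∑ i, v i = 0 →
      v ⬝ᵥ ((Hsᵀ * Hs) *ᵥ v) ≤ lam2 * ∑ i, (v i) ^ 2)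
    (f : Fin n → ℕ → ℝ)
    (hf0 : ∀ i, ∀ k < 3, 0 ≤ f i k)
    (hf1 : ∀ i, f i 0 + f i 1 + f i 2 = 1)
    (x : Fin n → ℝ)
    (hx : ∀ i, x i = f i 1 + f i 2)
    (hcheck : ∀ j, ∀ ℓ, Hs j ℓ = 1 →
      ∑ i ∈ (univ.filter (fun i => Hs j i = 1)).erase ℓ, x i ≥ x ℓ)
    (S V : ℝ)
    (hS : S = 2 * ∑ i, (1 - ∑ k ∈ Finset.range 3, f i k * Real.cos (2 * π * k / 3)))
    (hV : V = ∑ i, (∑ k ∈ Finset.range 3, (f i k) ^ 2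
        + 2 * ∑ l ∈ Finset.range 3, ∑ k ∈ Finset.range l,
            f i k * f i l * Real.cos (2 * π * ((k : ℝ) - l) / 3)
        - 2 * ∑ k ∈ Finset.range 3, f i k * Real.cos (2 * π * k / 3) + 1))
    (hVpos : 0 < V) :
    S ^ 2 / V ≥ 3 * (n * (2 * c - lam2) / ((c : ℝ) * d - lam2)) := by
  -- cosine values
  have c1 : Real.cos (2*π/3) = -(1/2) := by
    rw [show (2:ℝ)*π/3 = π - π/3 by ring, Real.cos_pi_sub, Real.cos_pi_div_three]
  have c2 : Real.cos (4*π/3) = -(1/2) := by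
    rw [show (4:ℝ)*π/3 = π + π/3 by ring, Real.cos_add]; simp [Real.cos_pi_div_three]
  have hcosS : ∀ i, ∑ k ∈ Finset.range 3, f i k * Real.cos (2 * π * k / 3)
      = f i 0 - (f i 1)/2 - (f i 2)/2 := by
    intro i
    simp only [Finset.sum_range_succ, Finset.sum_range_zero, Nat.cast_zero, Nat.cast_one,
      Nat.cast_ofNat]
    rw [show (2:ℝ)*π*0/3 = 0 by ring, show (2:ℝ)*π*1/3 = 2*π/3 by ring,
      show (2:ℝ)*π*2/3 = 4*π/3 by ring, c1, c2, Real.cos_zero]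
    ring
  have hcosV : ∀ i, ∑ l ∈ Finset.range 3, ∑ k ∈ Finset.range l,
      f i k * f i l * Real.cos (2 * π * ((k:ℝ) - l) / 3)
      = -(f i 0 * f i 1 + f i 0 * f i 2 + f i 1 * f i 2)/2 := by
    intro i
    simp only [Finset.sum_range_succ, Finset.sum_range_zero, Nat.cast_zero, Nat.cast_one,
      Nat.cast_ofNat]
    rw [show (2:ℝ)*π*((0:ℝ)-1)/3 = -(2*π/3) by ring,
      show (2:ℝ)*π*((0:ℝ)-2)/3 = -(4*π/3) by ring,
      show (2:ℝ)*π*((1:ℝ)-2)/3 = -(2*π/3) by ring, Real.cos_neg, Real.cos_neg, c1, c2]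
    ring
  -- S = 3 * ∑ x
  set X : ℝ := ∑ i, x i with hX
  set T : ℝ := ∑ i, (x i)^2 with hT
  have hS3 : S = 3 * X := by
    rw [hS, hX, Finset.mul_sum, Finset.mul_sum]
    refine Finset.sum_congr rfl fun i _ => ?_
    rw [hcosS i, hx i]
    have := hf1 i
    linarith
  -- V ≤ 3 T
  have hVeq : V = ∑ i, 3 * ((x i)^2 - f i 1 * f i 2) := by
    rw [hV]
    refine Finset.sum_congr rfl fun i _ => ?_
    rw [hcosS i, hcosV i, Finset.sum_range_succ, Finset.sum_range_succ,
      Finset.sum_range_succ, Finset.sum_range_zero, hx i]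
    have h := hf1 i
    linear_combination (f i 0 - 2*f i 1 - 2*f i 2 - 1) * h
  have hVle : V ≤ 3 * T := by
    rw [hVeq, hT, Finset.mul_sum]
    refine Finset.sum_le_sum fun i _ => ?_
    have h1 := hf0 i 1 (by norm_num)
    have h2 := hf0 i 2 (by norm_num)
    nlinarith [mul_nonneg h1 h2]
  -- nonnegativity of x
  have hxnn : ∀ i, 0 ≤ x i := by
    intro i
    have h1 := hf0 i 1 (by norm_num)
    have h2 := hf0 i 2 (by norm_num)
    rw [hx i]; linarith
  have hTnn : 0 ≤ T := Finset.sum_nonneg fun i _ => sq_nonneg _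
  -- n > 0
  have hn0 : 0 < n := by
    rcases Nat.eq_zero_or_pos n with h | h
    · subst h
      rw [hV] at hVpos
      simp at hVpos
    · exact h
  have hn : (0:ℝ) < n := by exact_mod_cast hn0
  -- 0/1 sums
  have hfs : ∀ j (g : Fin n → ℝ),
      ∑ i ∈ univ.filter (fun i => Hs j i = 1), g i = ∑ i, Hs j i * g i := by
    intro j g
    rw [Finset.sum_filter]
    refine Finset.sum_congr rfl fun i _ => ?_
    rcases h01 j i with h | h <;> simp [h]
  have hrs : ∀ j, ∑ i, Hs j i = (d:ℝ) := by
    intro j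
    have := hfs j (fun _ => (1:ℝ))
    simp only [mul_one] at this
    rw [← this, Finset.sum_const, hrow j, nsmul_eq_mul, mul_one]
  have hcs : ∀ i, ∑ j, Hs j i = (c:ℝ) := by
    intro i
    have h : ∑ j ∈ univ.filter (fun j => Hs j i = 1), (1:ℝ) = ∑ j, Hs j i := by
      rw [Finset.sum_filter]
      refine Finset.sum_congr rfl fun j _ => ?_
      rcases h01 j i with h | h <;> simp [h]
    rw [← h, Finset.sum_const, hcol i, nsmul_eq_mul, mul_one]
  -- quadratic form
  have hquad : ∀ y : Fin n → ℝ, y ⬝ᵥ ((Hsᵀ * Hs) *ᵥ y) = ∑ j, (∑ i, Hs j i * y i)^2 := by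
    intro y
    rw [← Matrix.mulVec_mulVec, Matrix.dotProduct_mulVec, Matrix.vecMul_transpose]
    simp [Matrix.mulVec, dotProduct, sq]
  -- lower bound on the quadratic form: 2 c T ≤ Q
  have hQlb : 2 * (c:ℝ) * T ≤ ∑ j, (∑ i, Hs j i * x i)^2 := by
    have hj : ∀ j, 2 * ∑ i ∈ univ.filter (fun i => Hs j i = 1), (x i)^2
        ≤ (∑ i, Hs j i * x i)^2 := by
      intro j
      rw [← hfs j x]
      set F := univ.filter (fun i => Hs j i = 1) with hF
      have hkey : ∀ ℓ ∈ F, 2 * x ℓ ≤ ∑ i ∈ F, x i := by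
        intro ℓ hℓ
        have hmem : Hs j ℓ = 1 := (Finset.mem_filter.mp hℓ).2
        have h1 := hcheck j ℓ hmem
        have h2 : ∑ i ∈ F.erase ℓ, x i = (∑ i ∈ F, x i) - x ℓ :=
          Finset.sum_erase_eq_sub hℓ
        rw [h2] at h1
        linarith
      calc 2 * ∑ i ∈ F, (x i)^2 = ∑ i ∈ F, x i * (2 * x i) := by
            rw [Finset.mul_sum]; exact Finset.sum_congr rfl fun i _ => by ring
        _ ≤ ∑ i ∈ F, x i * (∑ k ∈ F, x k) :=
            Finset.sum_le_sum fun i hi => mul_le_mul_of_nonneg_left (hkey i hi) (hxnn i)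
        _ = (∑ i ∈ F, x i)^2 := by rw [← Finset.sum_mul, sq]
    have hsum : ∑ j, 2 * ∑ i ∈ univ.filter (fun i => Hs j i = 1), (x i)^2
        = 2 * (c:ℝ) * T := by
      have : ∀ j, (2:ℝ) * ∑ i ∈ univ.filter (fun i => Hs j i = 1), (x i)^2
          = 2 * ∑ i, Hs j i * (x i)^2 := fun j => by rw [hfs j (fun i => (x i)^2)]
      rw [Finset.sum_congr rfl fun j _ => this j, ← Finset.mul_sum, Finset.sum_comm]
      have : ∀ i : Fin n, ∑ j, Hs j i * (x i)^2 = (c:ℝ) * (x i)^2 := fun i => by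
        rw [← Finset.sum_mul, hcs i]
      rw [Finset.sum_congr rfl fun i _ => this i, ← Finset.mul_sum, hT]
      ring
    calc 2 * (c:ℝ) * T = ∑ j, 2 * ∑ i ∈ univ.filter (fun i => Hs j i = 1), (x i)^2 :=
          hsum.symm
      _ ≤ ∑ j, (∑ i, Hs j i * x i)^2 := Finset.sum_le_sum fun j _ => hj j
  -- decompose x = v + μ 1
  set μ : ℝ := X / n with hμ
  have hμn : (n:ℝ) * μ = X := by
    rw [hμ]; field_simp
  set v : Fin n → ℝ := fun i => x i - μ with hv
  have hvsum : ∑ i, v i = 0 := by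
    simp only [hv, Finset.sum_sub_distrib, Finset.sum_const, Finset.card_univ,
      Fintype.card_fin, nsmul_eq_mul]
    rw [← hX, hμn]; ring
  have hvq := h2 v hvsum
  rw [hquad v] at hvq
  have hnv2 : (n:ℝ) * ∑ i, (v i)^2 = n * T - X^2 := by
    have hexp : ∑ i, (v i)^2 = T - 2*μ*X + n * μ^2 := by
      have : ∀ i, (v i)^2 = (x i)^2 - 2*μ*(x i) + μ^2 := fun i => by rw [hv]; ring
      rw [Finset.sum_congr rfl fun i _ => this i]
      rw [Finset.sum_add_distrib, Finset.sum_sub_distrib, Finset.sum_const,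
        Finset.card_univ, Fintype.card_fin, nsmul_eq_mul, ← Finset.mul_sum, ← hX, ← hT]
    rw [hexp]
    linear_combination ((n:ℝ)*μ - X) * hμn
  -- m d = n c
  have hmd : (m:ℝ) * d = n * c := by
    have h1 : ∑ j : Fin m, ∑ i, Hs j i = (m:ℝ) * d := by
      rw [Finset.sum_congr rfl fun j _ => hrs j, Finset.sum_const, Finset.card_univ,
        Fintype.card_fin, nsmul_eq_mul]
    have h2 : ∑ j : Fin m, ∑ i, Hs j i = (n:ℝ) * c := by
      rw [(Finset.sum_comm : ∑ j : Fin m, ∑ i : Fin n, Hs j i = ∑ i : Fin n, ∑ j : Fin m, Hs j i),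
        Finset.sum_congr rfl fun i _ => hcs i, Finset.sum_const,
        Finset.card_univ, Fintype.card_fin, nsmul_eq_mul]
    rw [← h1, h2]
  -- row sums shift
  have hsd : ∀ j, ∑ i, Hs j i * x i = (∑ i, Hs j i * v i) + μ * d := by
    intro j
    have : ∀ i, Hs j i * x i = Hs j i * v i + Hs j i * μ := fun i => by
      rw [hv]; ring
    rw [Finset.sum_congr rfl fun i _ => this i, Finset.sum_add_distrib,
      ← Finset.sum_mul, hrs j]
    ring
  have hsv0 : ∑ j, ∑ i, Hs j i * v i = 0 := by
    rw [Finset.sum_comm]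
    have : ∀ i : Fin n, ∑ j, Hs j i * v i = (c:ℝ) * v i := fun i => by
      rw [← Finset.sum_mul, hcs i]
    rw [Finset.sum_congr rfl fun i _ => this i, ← Finset.mul_sum, hvsum, mul_zero]
  have hQ : ∑ j, (∑ i, Hs j i * x i)^2
      = (∑ j, (∑ i, Hs j i * v i)^2) + (m:ℝ) * (μ*d)^2 := by
    have hterm : ∀ j, (∑ i, Hs j i * x i)^2
        = (∑ i, Hs j i * v i)^2 + (2*(μ*d))*(∑ i, Hs j i * v i) + (μ*d)^2 := fun j => by
      rw [hsd j]; ring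
    rw [Finset.sum_congr rfl fun j _ => hterm j, Finset.sum_add_distrib,
      Finset.sum_add_distrib, ← Finset.mul_sum, hsv0, Finset.sum_const,
      Finset.card_univ, Fintype.card_fin, nsmul_eq_mul]
    ring
  have hmud : (n:ℝ) * ((m:ℝ) * (μ*d)^2) = (c:ℝ)*d*X^2 := by
    linear_combination ((n:ℝ)*μ^2*(d:ℝ)) * hmd + ((c:ℝ)*(d:ℝ)*((n:ℝ)*μ + X)) * hμn
  -- combine: key inequality
  have key : 2*(c:ℝ) * (n*T) ≤ lam2 * (n*T - X^2) + (c:ℝ)*d*X^2 := by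
    have hQub : 2*(c:ℝ)*T ≤ (∑ j, (∑ i, Hs j i * v i)^2) + (m:ℝ) * (μ*d)^2 := by
      rw [← hQ]; exact hQlb
    have hstep : 2*(c:ℝ)*T ≤ lam2 * (∑ i, (v i)^2) + (m:ℝ) * (μ*d)^2 := by
      linarith [hvq, hQub]
    have hmul := mul_le_mul_of_nonneg_left hstep hn.le
    calc 2*(c:ℝ) * (n*T) = (n:ℝ) * (2*(c:ℝ)*T) := by ring
      _ ≤ (n:ℝ) * (lam2 * (∑ i, (v i)^2) + (m:ℝ) * (μ*d)^2) := hmul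
      _ = lam2 * ((n:ℝ) * ∑ i, (v i)^2) + (n:ℝ) * ((m:ℝ) * (μ*d)^2) := by ring
      _ = lam2 * (n*T - X^2) + (c:ℝ)*d*X^2 := by rw [hnv2, hmud]
  -- finish
  have hD : 0 < (c:ℝ)*d - lam2 := by linarith
  rw [ge_iff_le, le_div_iff₀ hVpos, hS3]
  have hgoal : 3 * ((n:ℝ) * (2*(c:ℝ) - lam2)) * V ≤ (3*X)^2 * ((c:ℝ)*d - lam2) := by
    have K : (2*(c:ℝ) - lam2) * (n*T) ≤ ((c:ℝ)*d - lam2) * X^2 := by linarith [key]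
    rcases le_or_gt 0 (2*(c:ℝ) - lam2) with hpos | hneg
    · have hnn : 0 ≤ (n:ℝ) * (2*(c:ℝ) - lam2) := mul_nonneg hn.le hpos
      have h1 := mul_le_mul_of_nonneg_left hVle hnn
      linarith [h1, K]
    · have h1 : (n:ℝ) * V * (2*(c:ℝ) - lam2) ≤ 0 :=
        mul_nonpos_of_nonneg_of_nonpos (mul_pos hn hVpos).le hneg.le
      have h2 : 0 ≤ (3*X)^2 * ((c:ℝ)*d - lam2) := mul_nonneg (sq_nonneg _) hD.le
      linarith [h1, h2]
  calc 3 * ((n:ℝ) * (2*(c:ℝ) - lam2) / ((c:ℝ)*d - lam2)) * V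
      = 3 * ((n:ℝ) * (2*(c:ℝ) - lam2)) * V / ((c:ℝ)*d - lam2) := by ring
    _ ≤ (3*X)^2 * ((c:ℝ)*d - lam2) / ((c:ℝ)*d - lam2) := by
        exact (div_le_div_iff_of_pos_right hD).mpr hgoal
    _ = (3*X)^2 := by field_simp
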